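/- Let (X,p) be a TVS-cone metric space over a locally convex space E whose topology is generated by a family S of monotone seminorms (so the cone P is normal). For every sequence (x_n) in X and every x ∈ X: (x_n) cone-converges to x if and only if p(x_n, x) → 0 in the topology of E. -/

import Mathlib

open Filter Topology

section Defs

variable {E : Type*} [AddCommGroup E] [Module ℝ E] [TopologicalSpace E]

/-- `P` is a closed, pointed convex cone with nonempty interior in the TVS `E`. -/
structure IsTVSCone (P : Set E) : Prop where
  add_mem : ∀ ⦃a⦄, a ∈ P → ∀ ⦃b⦄, b ∈ P → a + b ∈ P
  smul_mem : ∀ (r : ℝ), 0 ≤ r → ∀ ⦃a⦄, a ∈ P → r • a ∈ P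
  pointed : ∀ a, a ∈ P → -a ∈ P → a = 0
  isClosed : IsClosed P
  int_nonempty : (interior P).Nonempty

/-- `a ≤ b` with respect to the cone `P`. -/
def ConeLe (P : Set E) (a b : E) : Prop := b - a ∈ P

/-- `a ≪ b` with respect to the cone `P`. -/
def ConeLt (P : Set E) (a b : E) : Prop := b - a ∈ interior P

/-- `p : X × X → E` is a TVS-cone metric over the cone `P`. -/
structure IsConeMetric (P : Set E) {X : Type*} (p : X → X → E) : Prop where
  nonneg : ∀ x y, ConeLe P 0 (p x y)
  eq_zero_iff : ∀ x y, p x y = 0 ↔ x = y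
  symm : ∀ x y, p x y = p y x
  triangle : ∀ x y z, ConeLe P (p x y) (p x z + p z y)

/-- The sequence `x` cone-converges to `a`. -/
def ConeConverges (P : Set E) {X : Type*} (p : X → X → E) (x : ℕ → X) (a : X) : Prop :=
  ∀ c, c ∈ interior P → ∃ N, ∀ n ≥ N, ConeLt P (p (x n) a) c

/-- The sequence `x` is cone-Cauchy. -/
def ConeCauchy (P : Set E) {X : Type*} (p : X → X → E) (x : ℕ → X) : Prop :=
  ∀ c, c ∈ interior P → ∃ N, ∀ n ≥ N, ∀ m ≥ N, ConeLt P (p (x n) (x m)) c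

/-- `(X, p)` is cone-complete. -/
def ConeComplete (P : Set E) {X : Type*} (p : X → X → E) : Prop :=
  ∀ x : ℕ → X, ConeCauchy P p x → ∃ a, ConeConverges P p x a

/-- The nonlinear scalarization ξ_e(y) = inf {t : t • e - y ∈ P}. -/
noncomputable def xiScal (P : Set E) (e y : E) : ℝ := sInf {t : ℝ | t • e - y ∈ P}

/-- The open ball `B(x, c) = {y : p x y ≪ c}`. -/
def coneBall (P : Set E) {X : Type*} (p : X → X → E) (x : X) (c : E) : Set X :=
  {y | ConeLt P (p x y) c}

/-- The cone metric topology `τ_p`, generated by the balls `B(x,c)`, `c ≫ 0`. -/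
def coneTopology (P : Set E) {X : Type*} (p : X → X → E) : TopologicalSpace X :=
  TopologicalSpace.generateFrom {s | ∃ x c, c ∈ interior P ∧ s = coneBall P p x c}

end Defs

/-- over a normal cone in a locally convex space, cone convergence of `x_n`
to `x` is equivalent to `p (x_n) x → 0` in `E`. -/
theorem stmt_1 {E X : Type*} [AddCommGroup E] [Module ℝ E] [TopologicalSpace E]
    [IsTopologicalAddGroup E] [ContinuousSMul ℝ E] [T2Space E] [Nonempty X]
    {ι : Type*} [Nonempty ι] (S : ι → Seminorm ℝ E) (hS : WithSeminorms S)
    (P : Set E) (hP : IsTVSCone P)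
    (hmono : ∀ i : ι, ∀ a b : E, a ∈ P → ConeLe P a b → S i a ≤ S i b)
    (p : X → X → E) (hp : IsConeMetric P p) (x : ℕ → X) (a : X) :
    ConeConverges P p x a ↔ Tendsto (fun n => p (x n) a) atTop (nhds 0) := by
  obtain ⟨e, he⟩ := hP.int_nonempty
  constructor
  · intro h
    rw [hS.tendsto_nhds]
    intro i ε hε
    have hSe : (0:ℝ) ≤ S i e := apply_nonneg _ _
    set r : ℝ := ε / (S i e + 1) with hr
    have hrpos : 0 < r := div_pos hε (by linarith)
    have hre : r • e ∈ interior P := by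
      have h1 : IsOpenMap (fun y : E => r • y) := isOpenMap_smul₀ (ne_of_gt hrpos)
      have h2 : (fun y : E => r • y) '' interior P ⊆ P := by
        rintro _ ⟨y, hy, rfl⟩
        exact hP.smul_mem r hrpos.le (interior_subset hy)
      exact interior_maximal h2 (h1 _ isOpen_interior) ⟨e, he, rfl⟩
    obtain ⟨N, hN⟩ := h _ hre
    refine eventually_atTop.2 ⟨N, fun n hn => ?_⟩
    have hnonneg : p (x n) a ∈ P := by
      have := hp.nonneg (x n) a
      simpa [ConeLe] using this
    have hle : ConeLe P (p (x n) a) (r • e) := interior_subset (hN n hn)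
    have hkey := hmono i _ _ hnonneg hle
    have hsm : S i (r • e) = r * S i e := by
      rw [map_smul_eq_mul, Real.norm_eq_abs, abs_of_pos hrpos]
    have hlt : r * S i e < ε := by
      have : r * (S i e + 1) = ε := div_mul_cancel₀ ε (by linarith)
      nlinarith
    calc S i (p (x n) a - 0) = S i (p (x n) a) := by rw [sub_zero]
      _ ≤ S i (r • e) := hkey
      _ = r * S i e := hsm
      _ < ε := hlt
  · intro h c hc
    have hcont : Continuous (fun y : E => c - y) := by continuity
    have hopen : IsOpen {y : E | c - y ∈ interior P} :=
      isOpen_interior.preimage hcont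
    have h0 : (0:E) ∈ {y : E | c - y ∈ interior P} := by simpa using hc
    have hev : ∀ᶠ n in atTop, p (x n) a ∈ {y : E | c - y ∈ interior P} :=
      h.eventually (hopen.eventually_mem h0)
    obtain ⟨N, hN⟩ := eventually_atTop.1 hev
    exact ⟨N, fun n hn => hN n hn⟩
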